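/- Let G be a bipartite simple graph with n vertices and m ≥ 1 edges. Then the largest singular value of the LI-matrix of G equals μ₁(G) − 2m/n, i.e. σ₁(LI(G)) = μ₁(G) − 2m/n; equivalently, μ₁(G) ≥ 4m/n for every bipartite graph with at least one edge. -/

import Mathlib

open Finset SimpleGraph
open Matrix

attribute [local instance] Classical.propDecidable

/-- The `i`-th largest value of the tuple `f` (values sorted in non-increasing order). -/
noncomputable def sortDesc {n : ℕ} (f : Fin n → ℝ) : Fin n → ℝ :=
  fun i => f (Tuple.sort f i.rev)

/-- The Laplacian eigenvalues of `G`, in non-increasing order: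
`lapEig G 0 = μ₁ ≥ lapEig G 1 = μ₂ ≥ ⋯`. -/
noncomputable def lapEig {n : ℕ} (G : SimpleGraph (Fin n)) : Fin n → ℝ :=
  sortDesc (SimpleGraph.posSemidef_lapMatrix ℝ G).isHermitian.eigenvalues

/-- The number of edges of `G`. -/
noncomputable def numEdges {n : ℕ} (G : SimpleGraph (Fin n)) : ℕ :=
  G.edgeFinset.card

/-- The singular values of the LI-matrix `LI(G) = L(G) - (2m/n)·Iₙ`, in non-increasing
order; they are the values `|μᵢ - 2m/n|` sorted non-increasingly. -/
noncomputable def LIsv {n : ℕ} (G : SimpleGraph (Fin n)) : Fin n → ℝ :=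
  sortDesc (fun i => |lapEig G i - 2 * numEdges G / n|)

/-- The Ky Fan `k`-norm of the LI-matrix of `G`: the sum of the `k` largest singular
values of `LI(G)`. -/
noncomputable def kyFanLI {n : ℕ} (G : SimpleGraph (Fin n)) (k : ℕ) : ℝ :=
  ∑ i ∈ Finset.univ.filter (fun i : Fin n => (i : ℕ) < k), LIsv G i

/-- `S_k(L(G))`, the sum of the `k` largest Laplacian eigenvalues of `G`. -/
noncomputable def lapSum {n : ℕ} (G : SimpleGraph (Fin n)) (k : ℕ) : ℝ :=
  ∑ i ∈ Finset.univ.filter (fun i : Fin n => (i : ℕ) < k), lapEig G i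

/-- If `G` is a bipartite simple graph with `n` vertices and `m ≥ 1` edges,
then `σ₁(LI(G)) = μ₁(G) - 2m/n`; equivalently, `μ₁(G) ≥ 4m/n`. -/
-- sortDesc at 0 is the max
lemma sortDesc_zero_isGreatest {n : ℕ} (hn : 0 < n) (f : Fin n → ℝ) :
    (∃ j, sortDesc f ⟨0, hn⟩ = f j) ∧ ∀ i, f i ≤ sortDesc f ⟨0, hn⟩ := by
  constructor
  · exact ⟨_, rfl⟩
  · intro i
    have h := Tuple.monotone_sort f (a := (Tuple.sort f).symm i) (b := Fin.rev ⟨0, hn⟩)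
      (by rw [Fin.le_def]; simp [Fin.rev]; omega)
    simpa [sortDesc] using h

lemma rayleigh_bound {n : ℕ} {A : Matrix (Fin n) (Fin n) ℝ} (hA : A.IsHermitian) {t : ℝ}
    (ht : ∀ i, hA.eigenvalues i ≤ t) (x : Fin n → ℝ) :
    x ⬝ᵥ A *ᵥ x ≤ t * (x ⬝ᵥ x) := by
  set U : Matrix (Fin n) (Fin n) ℝ := (hA.eigenvectorUnitary : Matrix (Fin n) (Fin n) ℝ) with hU
  set y : Fin n → ℝ := star U *ᵥ x with hy
  have hst : (star U)ᵀ = U := by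
    rw [Matrix.star_eq_conjTranspose, conjTranspose_eq_transpose_of_trivial, transpose_transpose]
  have hdiag : (RCLike.ofReal ∘ hA.eigenvalues : Fin n → ℝ) = hA.eigenvalues := by
    funext i; simp
  have h1 : x ⬝ᵥ A *ᵥ x = y ⬝ᵥ (diagonal hA.eigenvalues *ᵥ y) := by
    conv_lhs => rw [hA.spectral_theorem, Unitary.conjStarAlgAut_apply]
    rw [hdiag, ← mulVec_mulVec, ← mulVec_mulVec, dotProduct_mulVec x U]
    congr 1
    rw [hy, ← mulVec_transpose, Matrix.star_eq_conjTranspose,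
      conjTranspose_eq_transpose_of_trivial]
  have h2 : y ⬝ᵥ y = x ⬝ᵥ x := by
    conv_lhs => rw [hy]
    rw [dotProduct_mulVec y (star U), ← mulVec_transpose, hst, mulVec_mulVec,
      (Matrix.mem_unitaryGroup_iff).mp hA.eigenvectorUnitary.2, one_mulVec]
  rw [h1, ← h2]
  have : y ⬝ᵥ (diagonal hA.eigenvalues *ᵥ y) = ∑ i, hA.eigenvalues i * (y i * y i) := by
    simp [dotProduct, mulVec_diagonal]; congr 1; funext i; ring
  rw [this, dotProduct, Finset.mul_sum]
  apply Finset.sum_le_sum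
  intro i _
  have : 0 ≤ y i * y i := mul_self_nonneg _
  nlinarith [ht i]

theorem stmt_3 {n : ℕ} (hn : 0 < n) (G : SimpleGraph (Fin n))
    (hbip : G.Colorable 2) (hm : 1 ≤ numEdges G) :
    LIsv G ⟨0, hn⟩ = lapEig G ⟨0, hn⟩ - 2 * (numEdges G : ℝ) / n ∧
      4 * (numEdges G : ℝ) / n ≤ lapEig G ⟨0, hn⟩ := by
  classical
  set hA := (SimpleGraph.posSemidef_lapMatrix ℝ G).isHermitian with hAdef
  obtain ⟨⟨j₀, hj₀⟩, hmax⟩ := sortDesc_zero_isGreatest hn hA.eigenvalues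
  set M : ℝ := lapEig G ⟨0, hn⟩ with hM
  have hMeq : M = sortDesc hA.eigenvalues ⟨0, hn⟩ := rfl
  -- the test vector
  obtain ⟨C⟩ := hbip
  set x : Fin n → ℝ := fun v => if C v = 0 then 1 else -1 with hx
  have hxsq : ∀ v, x v * x v = 1 := by
    intro v; by_cases h : C v = 0 <;> simp [hx, h]
  have hxx : x ⬝ᵥ x = (n : ℝ) := by
    simp [dotProduct, hxsq]
  have hquad : x ⬝ᵥ (G.lapMatrix ℝ) *ᵥ x = 4 * (numEdges G : ℝ) := by
    rw [← Matrix.toLinearMap₂'_apply', SimpleGraph.lapMatrix_toLinearMap₂']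
    have key : ∀ i j, (if G.Adj i j then (x i - x j) ^ 2 else 0) =
        (if G.Adj i j then (4 : ℝ) else 0) := by
      intro i j
      by_cases h : G.Adj i j
      · have hne : C i ≠ C j := C.valid h
        have : (x i - x j) ^ 2 = 4 := by
          by_cases hi : C i = 0 <;> by_cases hj : C j = 0
          · exact absurd (hi.trans hj.symm) hne
          · simp [hx, hi, hj]; norm_num
          · simp [hx, hi, hj]; norm_num
          · rw [show C i = 1 from Fin.eq_one_of_ne_zero _ hi,
              show C j = 1 from Fin.eq_one_of_ne_zero _ hj] at hne
            exact absurd rfl hne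
        simp [h, this]
      · simp [h]
    simp_rw [key]
    have : ∀ i : Fin n, (∑ j, if G.Adj i j then (4 : ℝ) else 0) = 4 * G.degree i := by
      intro i
      rw [SimpleGraph.degree_eq_sum_if_adj G i (R := ℝ), Finset.mul_sum]
      congr 1; funext j; split <;> norm_num
    simp_rw [this, ← Finset.mul_sum]
    have hdeg : ∑ i : Fin n, (G.degree i : ℝ) = 2 * (numEdges G : ℝ) := by
      have h := SimpleGraph.sum_degrees_eq_twice_card_edges G
      have he : numEdges G = G.edgeFinset.card := rfl
      rw [he]
      exact_mod_cast h
    rw [hdeg]; ring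
  -- Rayleigh bound
  have hray : 4 * (numEdges G : ℝ) ≤ M * n := by
    have := rayleigh_bound hA (t := M) (fun i => by rw [hMeq]; exact hmax i) x
    rwa [hquad, hxx] at this
  have hn' : (0 : ℝ) < n := by exact_mod_cast hn
  have hMge : 4 * (numEdges G : ℝ) / n ≤ M := by
    rw [div_le_iff₀ hn']; linarith [hray]
  refine ⟨?_, hMge⟩
  -- first part
  set c : ℝ := 2 * (numEdges G : ℝ) / n with hc
  have hc0 : 0 ≤ c := by positivity
  have h2c : 2 * c ≤ M := by
    have : 2 * c = 4 * (numEdges G : ℝ) / n := by rw [hc]; ring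
    linarith [hMge, this.ge, this.le]
  have hlaple : ∀ i, lapEig G i ≤ M := by
    intro i
    rw [hMeq]
    exact hmax _
  have hlapnn : ∀ i, 0 ≤ lapEig G i :=
    fun i => (SimpleGraph.posSemidef_lapMatrix ℝ G).eigenvalues_nonneg _
  obtain ⟨⟨k, hk⟩, gmax⟩ := sortDesc_zero_isGreatest hn (fun i => |lapEig G i - 2 * numEdges G / n|)
  have hLIsv : LIsv G ⟨0, hn⟩ = sortDesc (fun i => |lapEig G i - 2 * numEdges G / n|) ⟨0, hn⟩ := rfl
  have hub : LIsv G ⟨0, hn⟩ ≤ M - c := by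
    rw [hLIsv, hk]
    have h1 := hlaple k
    have h2 := hlapnn k
    rw [abs_le]
    constructor <;> [skip; skip] <;> rw [hc] <;> nlinarith [h2c, hc0]
  have hlb : M - c ≤ LIsv G ⟨0, hn⟩ := by
    have := gmax ⟨0, hn⟩
    rw [hLIsv]
    have hMc : c ≤ M := by linarith [h2c, hc0]
    have habs : |lapEig G ⟨0, hn⟩ - 2 * (numEdges G : ℝ) / n| = M - c := by
      rw [abs_of_nonneg (by simpa [hc] using sub_nonneg.mpr hMc)]
    calc M - c = |lapEig G ⟨0, hn⟩ - 2 * (numEdges G : ℝ) / n| := habs.symm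
      _ ≤ _ := this
  have := le_antisymm hub hlb
  rw [this, hc]
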